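/- There is an absolute constant C > 0 such that for every real matrix A ∈ ℝ^{m×n} with m, n ≥ 2 and every partial coloring x ∈ (−1,1)^n, there exists x' ∈ [−1,1]^n such that: (i) at least n/2 coordinates i ∈ [n] satisfy |x'_i| = 1, and (ii) for every row a_jᵀ of A, |⟨a_j, x'⟩ − ⟨a_j, x⟩| ≤ C · herdisc(A) · (log m)^{3/2}. -/

import Mathlib

open Matrix

/-- The discrepancy of a real matrix `A` with respect to colorings `x ∈ {-1,1}^n`. -/
noncomputable def disc {m n : Type*} [Fintype m] [Fintype n] (A : Matrix m n ℝ) : ℝ :=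
  sInf {d : ℝ | ∃ x : n → ℝ, (∀ i, x i = 1 ∨ x i = -1) ∧ d = ‖A.mulVec x‖}

/-- The hereditary discrepancy of `A`: the maximum of `disc B` over all matrices `B`
obtained from `A` by deleting a subset of the columns. -/
noncomputable def herdisc {m n : Type*} [Fintype m] [Fintype n] (A : Matrix m n ℝ) : ℝ :=
  sSup {d : ℝ | ∃ S : Finset n, d = disc (A.submatrix id (fun j : S => (j : n)))}

lemma exists_coloring {m n : ℕ} (A : Matrix (Fin m) (Fin n) ℝ) (S : Finset (Fin n)) :
    ∃ ε : Fin n → ℝ, (∀ i ∈ S, ε i = 1 ∨ ε i = -1) ∧ (∀ i, i ∉ S → ε i = 0) ∧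
      ∀ j, |∑ i, A j i * ε i| ≤ herdisc A := by
  classical
  set B := A.submatrix id (fun j : S => (j : Fin n)) with hB
  set D := {d : ℝ | ∃ x : S → ℝ, (∀ i, x i = 1 ∨ x i = -1) ∧ d = ‖B.mulVec x‖} with hD
  have hDne : D.Nonempty := ⟨‖B.mulVec (fun _ => 1)‖, fun _ => 1, fun _ => Or.inl rfl, rfl⟩
  have hDfin : D.Finite := by
    have hsub : D ⊆ (fun x : S → ℝ => ‖B.mulVec x‖) ''
        (Set.pi Set.univ fun _ : S => ({1, -1} : Set ℝ)) := by
      rintro d ⟨x, hx, rfl⟩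
      exact ⟨x, fun i _ => by rcases hx i with h | h <;> simp [h], rfl⟩
    exact ((Set.Finite.pi fun _ => ((Set.finite_singleton (-1:ℝ)).insert 1)).image _).subset hsub
  have hmem : disc B ∈ D := hDne.csInf_mem hDfin
  obtain ⟨x₀, hx₀, hval⟩ := hmem
  have hle : disc B ≤ herdisc A := by
    apply le_csSup
    · have hset : {d : ℝ | ∃ T : Finset (Fin n),
          d = disc (A.submatrix id (fun j : T => (j : Fin n)))} =
          Set.range (fun T : Finset (Fin n) => disc (A.submatrix id fun j : T => (j : Fin n))) := by
        ext d; simp [Set.range, eq_comm]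
      rw [hset]
      exact (Set.finite_range _).bddAbove
    · exact ⟨S, rfl⟩
  refine ⟨fun i => if h : i ∈ S then x₀ ⟨i, h⟩ else 0, ?_, ?_, ?_⟩
  · intro i hi; simpa [hi] using hx₀ ⟨i, hi⟩
  · intro i hi; simp [hi]
  · intro j
    have hsum : ∑ i, A j i * (if h : i ∈ S then x₀ ⟨i, h⟩ else 0) = B.mulVec x₀ j := by
      rw [Matrix.mulVec, dotProduct]
      rw [← Finset.sum_subset (Finset.subset_univ S)
        (fun i _ hiS => by simp [dif_neg hiS])]
      rw [Finset.univ_eq_attach]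
      rw [← Finset.sum_attach S (fun i => A j i * (if h : i ∈ S then x₀ ⟨i, h⟩ else 0))]
      refine Finset.sum_congr rfl fun i _ => ?_
      simp [hB, i.2]
    rw [hsum]
    have h2 : |B.mulVec x₀ j| ≤ ‖B.mulVec x₀‖ := by
      rw [← Real.norm_eq_abs]; exact norm_le_pi_norm _ j
    calc |B.mulVec x₀ j| ≤ ‖B.mulVec x₀‖ := h2
      _ = disc B := hval.symm
      _ ≤ herdisc A := hle

lemma round_step {m n : ℕ} (A : Matrix (Fin m) (Fin n) ℝ) :
    ∀ (k : ℕ) (y : Fin n → ℝ), (∀ i, |y i| ≤ 1) → (∀ i, ∃ z : ℤ, y i = (z : ℝ) / 2 ^ k) →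
    ∃ y' : Fin n → ℝ, (∀ i, y' i = 1 ∨ y' i = -1 ∨ y' i = 0) ∧
      ∀ j, |∑ i, A j i * y' i - ∑ i, A j i * y i| ≤ (1 - (1/2 : ℝ) ^ k) * herdisc A := by
  intro k
  induction k with
  | zero =>
    intro y hy hz
    refine ⟨y, fun i => ?_, fun j => by simp⟩
    obtain ⟨z, hzz⟩ := hz i
    have hz1 : y i = (z : ℝ) := by rw [hzz]; norm_num
    have habs : |z| ≤ 1 := by
      have := hy i
      rw [hz1] at this
      exact_mod_cast (by rwa [← Int.cast_abs, ← Int.cast_one, Int.cast_le] at this :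
        |z| ≤ (1 : ℤ))
    obtain ⟨hb1, hb2⟩ := abs_le.mp habs
    interval_cases z <;> rw [hz1] <;> norm_num
  | succ k ih =>
    intro y hy hz
    classical
    set S : Finset (Fin n) := Finset.univ.filter (fun i => ¬ ∃ w : ℤ, y i = (w : ℝ) / 2 ^ k)
      with hS
    obtain ⟨ε, hε1, hε0, hεB⟩ := exists_coloring A S
    set y₁ : Fin n → ℝ := fun i => y i + (1/2 : ℝ) ^ (k+1) * ε i with hy₁
    have key : ∀ i, |y₁ i| ≤ 1 ∧ ∃ w : ℤ, y₁ i = (w : ℝ) / 2 ^ k := by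
      intro i
      by_cases hi : i ∈ S
      · obtain ⟨z, hzz⟩ := hz i
        have hodd : ¬ ∃ w : ℤ, y i = (w : ℝ) / 2 ^ k := by
          simpa [hS] using hi
        obtain ⟨e, hei, he1⟩ : ∃ e : ℤ, (ε i = (e : ℝ)) ∧ (e = 1 ∨ e = -1) := by
          rcases hε1 i hi with h | h
          exacts [⟨1, by simp [h], Or.inl rfl⟩, ⟨-1, by simp [h], Or.inr rfl⟩]
        have hzodd : ¬ (2 : ℤ) ∣ z := by
          rintro ⟨w, rfl⟩
          exact hodd ⟨w, by rw [hzz]; push_cast; field_simp; try ring⟩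
        have hb : |(z : ℝ)| ≤ 2 ^ (k+1) := by
          have h1 := hy i
          rw [hzz, abs_div, abs_of_pos (by positivity : (0:ℝ) < 2 ^ (k+1)),
            div_le_one (by positivity)] at h1
          simpa using h1
        have hzb : |z| ≤ 2 ^ (k+1) := by exact_mod_cast hb
        have hne : |z| ≠ 2 ^ (k+1) := by
          intro h
          rcases abs_eq (by positivity : (0:ℤ) ≤ 2 ^ (k+1)) |>.mp h with h' | h'
          · exact hodd ⟨2 ^ k, by rw [hzz, h']; push_cast; field_simp; try ring⟩
          · exact hodd ⟨-2 ^ k, by rw [hzz, h']; push_cast; field_simp; try ring⟩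
        have hzb' : |z + e| ≤ 2 ^ (k+1) := by
          have hlt := abs_lt.mp (hzb.lt_of_ne hne)
          rw [abs_le]
          obtain ⟨p, hp⟩ : ∃ p : ℤ, (2:ℤ) ^ (k+1) = p := ⟨_, rfl⟩
          rw [hp] at hlt ⊢
          rcases he1 with rfl | rfl <;> omega
        have heven : (2 : ℤ) ∣ (z + e) := by
          rcases he1 with rfl | rfl <;> omega
        obtain ⟨w, hw⟩ := heven
        have hy₁i : y₁ i = ((z : ℝ) + (e : ℝ)) / 2 ^ (k+1) := by
          simp only [hy₁]
          rw [hzz, hei]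
          field_simp
          try ring
          rw [mul_assoc, ← mul_pow]; norm_num
        constructor
        · rw [hy₁i, abs_div, abs_of_pos (by positivity : (0:ℝ) < 2 ^ (k+1)),
            div_le_one (by positivity)]
          calc |(z : ℝ) + (e : ℝ)| = |((z + e : ℤ) : ℝ)| := by push_cast; ring_nf
            _ ≤ ((2 ^ (k+1) : ℤ) : ℝ) := by exact_mod_cast hzb'
            _ = 2 ^ (k+1) := by push_cast; ring
        · refine ⟨w, ?_⟩
          rw [hy₁i]
          have : (z : ℝ) + (e : ℝ) = 2 * (w : ℝ) := by exact_mod_cast hw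
          rw [this]
          field_simp
          try ring
      · have h0 : ε i = 0 := hε0 i hi
        have hyy : y₁ i = y i := by simp [hy₁, h0]
        have hw : ∃ w : ℤ, y i = (w : ℝ) / 2 ^ k := by
          by_contra h
          exact hi (Finset.mem_filter.mpr ⟨Finset.mem_univ _, h⟩)
        exact ⟨hyy ▸ hy i, hyy ▸ hw⟩
    obtain ⟨y', hy'mem, hy'err⟩ := ih y₁ (fun i => (key i).1) (fun i => (key i).2)
    refine ⟨y', hy'mem, fun j => ?_⟩
    have hdiff : ∑ i, A j i * y₁ i - ∑ i, A j i * y i = (1/2 : ℝ) ^ (k+1) * ∑ i, A j i * ε i := by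
      rw [Finset.mul_sum, ← Finset.sum_sub_distrib]
      exact Finset.sum_congr rfl fun i _ => by simp only [hy₁]; ring
    calc |∑ i, A j i * y' i - ∑ i, A j i * y i|
        = |(∑ i, A j i * y' i - ∑ i, A j i * y₁ i) + (∑ i, A j i * y₁ i - ∑ i, A j i * y i)| := by
          rw [sub_add_sub_cancel]
      _ ≤ |∑ i, A j i * y' i - ∑ i, A j i * y₁ i| + |∑ i, A j i * y₁ i - ∑ i, A j i * y i| :=
          abs_add_le _ _
      _ ≤ (1 - (1/2 : ℝ) ^ k) * herdisc A + (1/2 : ℝ) ^ (k+1) * herdisc A := by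
          refine add_le_add (hy'err j) ?_
          rw [hdiff, abs_mul, abs_of_pos (by positivity : (0:ℝ) < (1/2:ℝ) ^ (k+1))]
          exact mul_le_mul_of_nonneg_left (hεB j) (by positivity)
      _ = (1 - (1/2 : ℝ) ^ (k+1)) * herdisc A := by ring

theorem stmt2 :
    ∃ C : ℝ, 0 < C ∧
      ∀ (m n : ℕ) (A : Matrix (Fin m) (Fin n) ℝ), 2 ≤ m → 2 ≤ n →
        ∀ x : Fin n → ℝ, (∀ i, |x i| < 1) →
          ∃ x' : Fin n → ℝ, (∀ i, |x' i| ≤ 1) ∧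
            n ≤ 2 * Set.ncard {i : Fin n | |x' i| = 1} ∧
            ∀ j : Fin m, |(∑ i, A j i * x' i) - ∑ i, A j i * x i| ≤
              C * herdisc A * Real.log m ^ ((3 : ℝ) / 2) := by
  classical
  refine ⟨8, by norm_num, fun m n A hm hn x hx => ?_⟩
  set H := herdisc A with hHdef
  -- H ≥ 0
  have hH : 0 ≤ H := by
    obtain ⟨ε, -, -, hεB⟩ := exists_coloring A (∅ : Finset (Fin n))
    exact le_trans (abs_nonneg _) (hεB ⟨0, by omega⟩)
  -- entries bounded by H
  have hentry : ∀ j i, |A j i| ≤ H := by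
    intro j i
    obtain ⟨ε, hε1, hε0, hεB⟩ := exists_coloring A ({i} : Finset (Fin n))
    have hsum : ∑ i', A j i' * ε i' = A j i * ε i := by
      refine Finset.sum_eq_single_of_mem i (Finset.mem_univ i) fun b _ hb => ?_
      rw [hε0 b (by simp [hb]), mul_zero]
    have h1 : |ε i| = 1 := by rcases hε1 i (by simp) with h | h <;> simp [h]
    have := hεB j
    rw [hsum, abs_mul, h1, mul_one] at this
    exact this
  -- truncation: y i = ⌊x i * 2^n⌋ / 2^n
  set y : Fin n → ℝ := fun i => (⌊x i * 2 ^ n⌋ : ℝ) / 2 ^ n with hy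
  have hpow : (0:ℝ) < 2 ^ n := by positivity
  have hyb : ∀ i, |y i| ≤ 1 := by
    intro i
    have h1 := abs_lt.mp (hx i)
    have hfl : (-(2^n) : ℤ) ≤ ⌊x i * 2 ^ n⌋ := by
      rw [Int.le_floor]; push_cast; nlinarith [h1.1]
    have hfl' : (-(2^n) : ℝ) ≤ (⌊x i * 2 ^ n⌋ : ℝ) := by exact_mod_cast hfl
    rw [abs_le, hy]
    constructor
    · rw [le_div_iff₀ hpow]; linarith
    · rw [div_le_one hpow]
      exact (Int.floor_le _).trans (by nlinarith [h1.2])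
  have hyz : ∀ i, ∃ z : ℤ, y i = (z : ℝ) / 2 ^ n := fun i => ⟨⌊x i * 2 ^ n⌋, rfl⟩
  have hyx : ∀ i, |y i - x i| ≤ (1/2 : ℝ) ^ n := by
    intro i
    have h1 : (⌊x i * 2 ^ n⌋ : ℝ) ≤ x i * 2 ^ n := Int.floor_le _
    have h2 : x i * 2 ^ n - 1 ≤ (⌊x i * 2 ^ n⌋ : ℝ) := by
      have := Int.lt_floor_add_one (x i * 2 ^ n); linarith
    have key : y i - x i = ((⌊x i * 2 ^ n⌋ : ℝ) - x i * 2 ^ n) / 2 ^ n := by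
      simp only [hy]; field_simp; try ring
    rw [key, abs_div, abs_of_pos hpow, div_le_iff₀ hpow]
    have hcan : (1/2:ℝ)^n * 2^n = 1 := by
      rw [one_div, inv_pow, inv_mul_cancel₀ (ne_of_gt hpow)]
    rw [hcan, abs_le]
    constructor <;> linarith
  -- truncation error per row
  have htrunc : ∀ j, |∑ i, A j i * y i - ∑ i, A j i * x i| ≤ H := by
    intro j
    have hb : ∀ i ∈ Finset.univ, |A j i * y i - A j i * x i| ≤ H * (1/2:ℝ)^n := by
      intro i _
      rw [← mul_sub, abs_mul]
      exact mul_le_mul (hentry j i) (hyx i) (abs_nonneg _) hH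
    calc |∑ i, A j i * y i - ∑ i, A j i * x i| = |∑ i, (A j i * y i - A j i * x i)| := by
          rw [Finset.sum_sub_distrib]
      _ ≤ ∑ i, |A j i * y i - A j i * x i| := Finset.abs_sum_le_sum_abs _ _
      _ ≤ ∑ _i : Fin n, H * (1/2:ℝ)^n := Finset.sum_le_sum hb
      _ = n * (H * (1/2:ℝ)^n) := by
          rw [Finset.sum_const, Finset.card_univ, Fintype.card_fin, nsmul_eq_mul]
      _ ≤ H := by
          have h2n : (n:ℝ) ≤ 2 ^ n := by exact_mod_cast (Nat.lt_two_pow_self (n := n)).le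
          have hn1 : (n:ℝ) * (1/2:ℝ)^n ≤ 1 := by
            rw [one_div, inv_pow, ← div_eq_mul_inv, div_le_one hpow]
            exact h2n
          calc (n:ℝ) * (H * (1/2:ℝ)^n) = ((n:ℝ) * (1/2:ℝ)^n) * H := by ring
            _ ≤ 1 * H := mul_le_mul_of_nonneg_right hn1 hH
            _ = H := one_mul H
  -- rounding
  obtain ⟨y₂, hy₂mem, hy₂err⟩ := round_step A n y hyb hyz
  -- final push on zeros
  obtain ⟨ε, hε1, hε0, hεB⟩ := exists_coloring A (Finset.univ.filter (fun i => y₂ i = 0))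
  set x' : Fin n → ℝ := fun i => y₂ i + ε i with hx'
  have hx'pm : ∀ i, x' i = 1 ∨ x' i = -1 := by
    intro i
    by_cases h : y₂ i = 0
    · have := hε1 i (by simp [h])
      rcases this with h' | h' <;> simp [hx', h, h']
    · have h0 : ε i = 0 := hε0 i (by simp [h])
      rcases hy₂mem i with h' | h' | h'
      · exact Or.inl (by simp [hx', h', h0])
      · exact Or.inr (by simp [hx', h', h0])
      · exact absurd h' h
  have herr3 : ∀ j, |∑ i, A j i * x' i - ∑ i, A j i * y₂ i| ≤ H := by
    intro j
    have hd : ∑ i, A j i * x' i - ∑ i, A j i * y₂ i = ∑ i, A j i * ε i := by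
      rw [← Finset.sum_sub_distrib]
      exact Finset.sum_congr rfl fun i _ => by simp only [hx']; ring
    rw [hd]; exact hεB j
  refine ⟨x', fun i => by rcases hx'pm i with h | h <;> simp [h], ?_, fun j => ?_⟩
  · have hset : {i : Fin n | |x' i| = 1} = Set.univ := by
      ext i; simp only [Set.mem_setOf_eq, Set.mem_univ, iff_true]
      rcases hx'pm i with h | h <;> simp [h]
    rw [hset, Set.ncard_univ, Nat.card_eq_fintype_card, Fintype.card_fin]
    omega
  · have e1 := herr3 j
    have e2 := hy₂err j
    have e3 := htrunc j
    have htot : |∑ i, A j i * x' i - ∑ i, A j i * x i| ≤ 3 * H := by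
      have habs : |∑ i, A j i * x' i - ∑ i, A j i * x i| ≤
          |∑ i, A j i * x' i - ∑ i, A j i * y₂ i| + |∑ i, A j i * y₂ i - ∑ i, A j i * y i|
            + |∑ i, A j i * y i - ∑ i, A j i * x i| := by
        calc |∑ i, A j i * x' i - ∑ i, A j i * x i|
            = |(∑ i, A j i * x' i - ∑ i, A j i * y₂ i) + ((∑ i, A j i * y₂ i - ∑ i, A j i * y i)
              + (∑ i, A j i * y i - ∑ i, A j i * x i))| := by rw [sub_add_sub_cancel,
                sub_add_sub_cancel]
          _ ≤ _ := by
              refine (abs_add_le _ _).trans ?_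
              have := abs_add_le (∑ i, A j i * y₂ i - ∑ i, A j i * y i)
                (∑ i, A j i * y i - ∑ i, A j i * x i)
              linarith
      have hstep : (1 - (1/2:ℝ)^n) * H ≤ H := by nlinarith [pow_pos (by norm_num : (0:ℝ) < 1/2) n]
      linarith
    -- 3 H ≤ 8 H L
    have hm2 : (2:ℝ) ≤ (m:ℝ) := by exact_mod_cast hm
    have hlog : Real.log 2 ≤ Real.log m := Real.log_le_log (by norm_num) hm2
    have h0 : (0:ℝ) ≤ Real.log 2 := Real.log_nonneg one_le_two
    have hbase : Real.log 2 ^ ((3:ℝ)/2) ≤ Real.log m ^ ((3:ℝ)/2) :=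
      Real.rpow_le_rpow h0 hlog (by norm_num)
    have hlb : (3:ℝ)/8 ≤ Real.log 2 ^ ((3:ℝ)/2) := by
      set t := Real.log 2 with ht'
      have ht : (0.6931471803 : ℝ) < t := Real.log_two_gt_d9
      have hu0 : 0 ≤ t ^ ((3:ℝ)/2) := Real.rpow_nonneg (by linarith) _
      have hsq : (t ^ ((3:ℝ)/2)) ^ (2:ℕ) = t ^ (3:ℕ) := by
        rw [← Real.rpow_natCast (t ^ ((3:ℝ)/2)) 2, ← Real.rpow_mul (by linarith),
          show ((3:ℝ)/2) * ((2:ℕ):ℝ) = ((3:ℕ):ℝ) by norm_num, Real.rpow_natCast]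
      have ht3 : (0.32:ℝ) ≤ t ^ (3:ℕ) := by nlinarith [ht, sq_nonneg (t - 0.7)]
      nlinarith [hu0, hsq, ht3]
    have hL : (3:ℝ)/8 ≤ Real.log m ^ ((3:ℝ)/2) := le_trans hlb hbase
    have hfin : 3 * H ≤ 8 * H * Real.log m ^ ((3:ℝ)/2) := by
      nlinarith [mul_nonneg hH (by linarith : (0:ℝ) ≤ Real.log m ^ ((3:ℝ)/2) - 3/8)]
    calc |∑ i, A j i * x' i - ∑ i, A j i * x i| ≤ 3 * H := htot
      _ ≤ 8 * H * Real.log m ^ ((3:ℝ)/2) := hfin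
      _ = 8 * herdisc A * Real.log m ^ ((3:ℝ)/2) := by rw [hHdef]
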